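/- Let V be a finite-dimensional complex vector space arising as the complexification of a real vector space, with induced conjugation on V ⊕ V*, and let D ⊆ V ⊕ V* be maximal isotropic for the pairing ⟨v+ξ, w+η⟩ = η(v)+ξ(w). Then dim_ℂ(D ∩ D̄) ≡ dim_ℂ V (mod 2) — i.e., the real index of D has the same parity as dim V. -/

import Mathlib

open Module

/-- The natural complex-bilinear pairing `⟨v+ξ, w+η⟩ = η(v) + ξ(w)` on `V ⊕ V*`. -/
def pairC {V : Type*} [AddCommGroup V] [Module ℂ V]
    (e f : V × Module.Dual ℂ V) : ℂ :=
  f.2 e.1 + e.2 f.1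

universe u

lemma finrank_conj_eq {M : Type u} [AddCommGroup M] [Module ℂ M]
    (g : M → M)
    (hadd : ∀ x y, g (x + y) = g x + g y)
    (hsmul : ∀ (c : ℂ) (x : M), g (c • x) = (starRingEnd ℂ c) • g x)
    (hinv : ∀ x, g (g x) = x)
    (X Y : Submodule ℂ M) (hXY : (Y : Set M) = g '' (X : Set M)) :
    Module.finrank ℂ X = Module.finrank ℂ Y := by
  have hmemY : ∀ x ∈ X, g x ∈ Y := by
    intro x hx
    have : g x ∈ (Y : Set M) := by rw [hXY]; exact ⟨x, hx, rfl⟩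
    exact this
  have hmemX : ∀ y ∈ Y, g y ∈ X := by
    intro y hy
    have hy' : y ∈ (Y : Set M) := hy
    rw [hXY] at hy'
    obtain ⟨x, hx, rfl⟩ := hy'
    rw [hinv]; exact hx
  let j : X ≃+ Y :=
    { toFun := fun x => ⟨g x, hmemY x x.2⟩
      invFun := fun y => ⟨g y, hmemX y y.2⟩
      left_inv := fun x => by ext; simp [hinv]
      right_inv := fun y => by ext; simp [hinv]
      map_add' := fun x y => by ext; exact hadd x y }
  have hrank : Module.rank ℂ X = Module.rank ℂ Y := by
    refine rank_eq_of_equiv_equiv (ZeroHom.mk (starRingEnd ℂ) (map_zero _)) j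
      (Function.Involutive.bijective (fun z => Complex.conj_conj z)) ?_
    intro r m
    ext
    exact hsmul r m
  simp only [Module.finrank]
  rw [hrank]

/-- Rank–nullity for the restriction of a linear map to a submodule. -/

lemma finrank_map_add_inf_ker {M N : Type*} [AddCommGroup M] [Module ℂ M]
    [AddCommGroup N] [Module ℂ N] [FiniteDimensional ℂ M]
    (f : M →ₗ[ℂ] N) (p : Submodule ℂ M) :
    Module.finrank ℂ (p.map f) + Module.finrank ℂ (p ⊓ LinearMap.ker f : Submodule ℂ M)
      = Module.finrank ℂ p := by
  have h := LinearMap.finrank_range_add_finrank_ker (f.comp p.subtype)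
  have hr : LinearMap.range (f.comp p.subtype) = p.map f := by
    rw [LinearMap.range_comp, Submodule.range_subtype]
  have hk : LinearMap.ker (f.comp p.subtype)
      = Submodule.comap p.subtype (p ⊓ LinearMap.ker f) := by
    rw [LinearMap.ker_comp, Submodule.comap_inf, Submodule.comap_subtype_self, top_inf_eq]
  have hk2 : Module.finrank ℂ (LinearMap.ker (f.comp p.subtype))
      = Module.finrank ℂ (p ⊓ LinearMap.ker f : Submodule ℂ M) := by
    rw [hk]
    exact LinearEquiv.finrank_eq (Submodule.comapSubtypeEquivOfLe inf_le_left)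
  rw [hr, hk2] at h
  exact h

lemma alt_parity (n : ℕ) : ∀ (M : Type u) [AddCommGroup M] [Module ℂ M]
    [FiniteDimensional ℂ M] (C : LinearMap.BilinForm ℂ M), C.IsAlt →
    Module.finrank ℂ M ≤ n →
    Module.finrank ℂ (C.orthogonal ⊤) % 2 = Module.finrank ℂ M % 2 := by
  induction n with
  | zero =>
    intro M _ _ _ C _ hle
    have h1 : Module.finrank ℂ (C.orthogonal ⊤) ≤ Module.finrank ℂ M :=
      Submodule.finrank_le _
    omega
  | succ n IH =>
    intro M _ _ _ C hAlt hle
    by_cases hC : C = 0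
    · subst hC
      have : ((0 : LinearMap.BilinForm ℂ M).orthogonal ⊤ : Submodule ℂ M) = ⊤ := by
        ext z
        simp [LinearMap.BilinForm.mem_orthogonal_iff, LinearMap.BilinForm.IsOrtho]
      rw [this, finrank_top]
    · -- find x, y with C x y ≠ 0
      have hxy : ∃ x y, C x y ≠ 0 := by
        by_contra h
        push_neg at h
        exact hC (by ext x y; simp [h])
      obtain ⟨x, y, hxy⟩ := hxy
      have hyx : C y x ≠ 0 := by
        rw [← LinearMap.IsAlt.neg hAlt x y]; simpa using hxy
      have hli : LinearIndependent ℂ ![x, y] := by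
        rw [LinearIndependent.pair_iff]
        intro s t hst
        have h1 : C x (s • x + t • y) = 0 := by rw [hst]; simp
        have h2 : C y (s • x + t • y) = 0 := by rw [hst]; simp
        simp only [map_add, map_smul, smul_eq_mul, hAlt.self_eq_zero] at h1 h2
        rw [mul_zero, add_zero] at h2
        rw [mul_zero, zero_add] at h1
        constructor
        · exact (mul_eq_zero.1 h2).resolve_right hyx
        · exact (mul_eq_zero.1 h1).resolve_right hxy
      set U : Submodule ℂ M := Submodule.span ℂ ({x, y} : Set M) with hU
      have hxU : x ∈ U := Submodule.subset_span (Set.mem_insert _ _)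
      have hyU : y ∈ U := Submodule.subset_span (Set.mem_insert_of_mem _ rfl)
      have hUdim : Module.finrank ℂ U = 2 := by
        rw [hU, ← Matrix.range_cons_cons_empty x y ![], finrank_span_eq_card hli]
        simp
      have hmemU : ∀ z ∈ U, ∃ s t : ℂ, z = s • x + t • y := by
        intro z hz
        rw [hU, Submodule.mem_span_pair] at hz
        obtain ⟨s, t, hc⟩ := hz
        exact ⟨s, t, hc.symm⟩
      have hnd : (C.restrict U).Nondegenerate := by
        refine (LinearMap.IsRefl.nondegenerate_iff_separatingLeft (B := C.restrict U) (fun a b h => hAlt.isRefl a b h)).2 ?_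
        intro z hz
        obtain ⟨s, t, hst⟩ := hmemU z z.2
        have h1 : C (z : M) y = 0 := hz ⟨y, hyU⟩
        have h2 : C (z : M) x = 0 := hz ⟨x, hxU⟩
        rw [hst] at h1 h2
        simp only [map_add, map_smul, LinearMap.add_apply, LinearMap.smul_apply,
          smul_eq_mul, hAlt.self_eq_zero] at h1 h2
        rw [mul_zero, add_zero] at h1
        rw [mul_zero, zero_add] at h2
        have hs : s = 0 := (mul_eq_zero.1 h1).resolve_right hxy
        have ht : t = 0 := (mul_eq_zero.1 h2).resolve_right hyx
        ext
        rw [hst, hs, ht]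
        simp
      have hcompl : IsCompl U (C.orthogonal U) :=
        LinearMap.BilinForm.isCompl_orthogonal_of_restrict_nondegenerate hAlt.isRefl hnd
      set O : Submodule ℂ M := C.orthogonal U with hO
      have hdim : Module.finrank ℂ U + Module.finrank ℂ O = Module.finrank ℂ M :=
        Submodule.finrank_add_eq_of_isCompl hcompl
      set C' : LinearMap.BilinForm ℂ O := C.restrict O with hC'
      have hAlt' : C'.IsAlt := fun z => hAlt z
      have hOle : Module.finrank ℂ O ≤ n := by omega
      have hIH := IH O C' hAlt' hOle
      have hradmap : (C'.orthogonal ⊤).map O.subtype = C.orthogonal ⊤ := by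
        apply le_antisymm
        · rintro z hz
          obtain ⟨⟨z, hzO⟩, hz1, rfl⟩ := Submodule.mem_map.1 hz
          intro m _
          have hm : m ∈ U ⊔ O := by rw [hcompl.codisjoint.eq_top]; trivial
          obtain ⟨u, hu, o, ho, rfl⟩ := Submodule.mem_sup.1 hm
          have h1 : C u z = 0 := hzO u hu
          have h2 : C o z = 0 := hz1 ⟨o, ho⟩ trivial
          show C (u + o) (O.subtype ⟨z, hzO⟩) = 0
          rw [map_add]
          simp only [LinearMap.add_apply, Submodule.subtype_apply]
          rw [h1, h2, add_zero]
        · intro z hz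
          have hzO : z ∈ O := fun u hu => hz u trivial
          refine Submodule.mem_map.2 ⟨⟨z, hzO⟩, ?_, rfl⟩
          intro w _
          exact hz (w : M) trivial
      have hfr : Module.finrank ℂ (C.orthogonal ⊤)
          = Module.finrank ℂ (C'.orthogonal ⊤) := by
        rw [← hradmap]
        exact Submodule.finrank_map_subtype_eq O _
      omega

section PairLemmas

variable {V : Type*} [AddCommGroup V] [Module ℂ V]

lemma pairC_add_left (a a' b : V × Module.Dual ℂ V) :
    pairC (a + a') b = pairC a b + pairC a' b := by
  simp [pairC]; ring

lemma pairC_add_right (a b b' : V × Module.Dual ℂ V) :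
    pairC a (b + b') = pairC a b + pairC a b' := by
  simp [pairC]; ring

lemma pairC_smul_left (c : ℂ) (a b : V × Module.Dual ℂ V) :
    pairC (c • a) b = c * pairC a b := by
  simp [pairC]; ring

lemma pairC_smul_right (c : ℂ) (a b : V × Module.Dual ℂ V) :
    pairC a (c • b) = c * pairC a b := by
  simp [pairC]; ring

lemma pairC_sub_left (a a' b : V × Module.Dual ℂ V) :
    pairC (a - a') b = pairC a b - pairC a' b := by
  simp [pairC]; ring

lemma pairC_sub_right (a b b' : V × Module.Dual ℂ V) :
    pairC a (b - b') = pairC a b - pairC a b' := by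
  simp [pairC]; ring

/-- `pairC` as a bilinear form. -/
noncomputable def pairB (V : Type*) [AddCommGroup V] [Module ℂ V] :
    LinearMap.BilinForm ℂ (V × Module.Dual ℂ V) :=
  LinearMap.mk₂ ℂ pairC pairC_add_left pairC_smul_left pairC_add_right pairC_smul_right

@[simp] lemma pairB_apply (a b : V × Module.Dual ℂ V) : pairB V a b = pairC a b := rfl

end PairLemmas

theorem stmt19 (V : Type*) [AddCommGroup V] [Module ℂ V] [FiniteDimensional ℂ V]
    (σ : V → V)
    (hσadd : ∀ x y, σ (x + y) = σ x + σ y)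
    (hσsmul : ∀ (c : ℂ) (x : V), σ (c • x) = (starRingEnd ℂ c) • σ x)
    (hσinv : ∀ x, σ (σ x) = x)
    (σP : V × Module.Dual ℂ V → V × Module.Dual ℂ V)
    (hσP : ∀ (x : V) (ξ : Module.Dual ℂ V),
      (σP (x, ξ)).1 = σ x ∧ ∀ v : V, (σP (x, ξ)).2 v = starRingEnd ℂ (ξ (σ v)))
    (D : Submodule ℂ (V × Module.Dual ℂ V))
    (hiso : ∀ a ∈ D, ∀ b ∈ D, pairC a b = 0)
    (hdim : Module.finrank ℂ D = Module.finrank ℂ V)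
    (Dbar : Submodule ℂ (V × Module.Dual ℂ V))
    (hDbar : (Dbar : Set (V × Module.Dual ℂ V)) = σP '' (D : Set (V × Module.Dual ℂ V))) :
    Module.finrank ℂ (D ⊓ Dbar : Submodule ℂ (V × Module.Dual ℂ V)) % 2
      = Module.finrank ℂ V % 2 := by
  classical
  set n := Module.finrank ℂ V with hn
  -- basic facts about σP
  have hσP1 : ∀ p : V × Module.Dual ℂ V, (σP p).1 = σ p.1 := fun p => (hσP p.1 p.2).1
  have hσP2 : ∀ (p : V × Module.Dual ℂ V) (v : V),
      (σP p).2 v = starRingEnd ℂ (p.2 (σ v)) := fun p => (hσP p.1 p.2).2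
  have sadd : ∀ p q, σP (p + q) = σP p + σP q := by
    intro p q
    have h1 : (σP (p + q)).1 = (σP p + σP q).1 := by
      rw [Prod.fst_add, hσP1, hσP1, hσP1, Prod.fst_add, hσadd]
    have h2 : (σP (p + q)).2 = (σP p + σP q).2 := by
      apply LinearMap.ext; intro v
      rw [Prod.snd_add, LinearMap.add_apply, hσP2, hσP2, hσP2, Prod.snd_add,
        LinearMap.add_apply, map_add]
    exact Prod.ext h1 h2
  have ssmul : ∀ (c : ℂ) p, σP (c • p) = (starRingEnd ℂ c) • σP p := by
    intro c p
    have h1 : (σP (c • p)).1 = ((starRingEnd ℂ c) • σP p).1 := by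
      rw [Prod.smul_fst, hσP1, Prod.smul_fst, hσP1, hσsmul]
    have h2 : (σP (c • p)).2 = ((starRingEnd ℂ c) • σP p).2 := by
      apply LinearMap.ext; intro v
      rw [Prod.smul_snd, LinearMap.smul_apply, hσP2, hσP2, Prod.smul_snd,
        LinearMap.smul_apply, smul_eq_mul, smul_eq_mul, map_mul]
    exact Prod.ext h1 h2
  have sinv : ∀ p, σP (σP p) = p := by
    intro p
    have h1 : (σP (σP p)).1 = p.1 := by rw [hσP1, hσP1, hσinv]
    have h2 : (σP (σP p)).2 = p.2 := by
      apply LinearMap.ext; intro v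
      rw [hσP2, hσP2, Complex.conj_conj, hσinv]
    exact Prod.ext h1 h2
  have spair : ∀ p q, pairC (σP p) (σP q) = starRingEnd ℂ (pairC p q) := by
    intro p q
    have h1 : (σP q).2 (σP p).1 = starRingEnd ℂ (q.2 p.1) := by
      rw [hσP1, hσP2, hσinv]
    have h2 : (σP p).2 (σP q).1 = starRingEnd ℂ (p.2 q.1) := by
      rw [hσP1, hσP2, hσinv]
    simp only [pairC, h1, h2, map_add]
  -- membership in Dbar
  have hDbar_mem : ∀ p ∈ D, σP p ∈ Dbar := by
    intro p hp
    show σP p ∈ (Dbar : Set (V × Module.Dual ℂ V))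
    rw [hDbar]; exact ⟨p, hp, rfl⟩
  have hDbar_mem' : ∀ q ∈ Dbar, ∃ p ∈ D, σP p = q := by
    intro q hq
    have : q ∈ (Dbar : Set (V × Module.Dual ℂ V)) := hq
    rw [hDbar] at this
    obtain ⟨p, hp, rfl⟩ := this
    exact ⟨p, hp, rfl⟩
  have hisobar : ∀ a ∈ Dbar, ∀ b ∈ Dbar, pairC a b = 0 := by
    intro a ha b hb
    obtain ⟨a', ha', rfl⟩ := hDbar_mem' a ha
    obtain ⟨b', hb', rfl⟩ := hDbar_mem' b hb
    rw [spair, hiso a' ha' b' hb', map_zero]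
  have hdimbar : Module.finrank ℂ Dbar = n := by
    rw [← finrank_conj_eq σP sadd ssmul sinv D Dbar hDbar]; exact hdim
  -- the bilinear form and orthogonality
  have hBrefl : (pairB V).IsRefl := by
    intro a b h
    simp only [pairB_apply, pairC] at h ⊢
    rw [add_comm]; exact h
  have hBnd : (pairB V).Nondegenerate := by
    refine (LinearMap.IsRefl.nondegenerate_iff_separatingLeft hBrefl).2 ?_
    intro p hp
    have h1 : p.2 = 0 := by
      apply LinearMap.ext; intro w
      have := hp (w, (0 : Module.Dual ℂ V))
      simpa [pairC] using this
    have h2 : p.1 = 0 := by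
      rw [← Module.forall_dual_apply_eq_zero_iff ℂ]
      intro η
      have := hp ((0 : V), η)
      simpa [pairC] using this
    exact Prod.ext h2 h1
  have hP2n : Module.finrank ℂ (V × Module.Dual ℂ V) = n + n := by
    rw [Module.finrank_prod, Subspace.dual_finrank_eq]
  have hperp : (pairB V).orthogonal D = D := by
    have hle : D ≤ (pairB V).orthogonal D := by
      intro m hm
      rw [LinearMap.BilinForm.mem_orthogonal_iff]
      intro a ha
      show pairB V a m = 0
      simpa using hiso a ha m hm
    refine (Submodule.eq_of_le_of_finrank_le hle ?_).symm
    rw [LinearMap.BilinForm.finrank_orthogonal hBnd, hP2n, hdim]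
    omega
  have hperpbar : (pairB V).orthogonal Dbar = Dbar := by
    have hle : Dbar ≤ (pairB V).orthogonal Dbar := by
      intro m hm
      rw [LinearMap.BilinForm.mem_orthogonal_iff]
      intro a ha
      show pairB V a m = 0
      simpa using hisobar a ha m hm
    refine (Submodule.eq_of_le_of_finrank_le hle ?_).symm
    rw [LinearMap.BilinForm.finrank_orthogonal hBnd, hP2n, hdimbar]
    omega
  -- projections
  set fstL := LinearMap.fst ℂ V (Module.Dual ℂ V) with hfstL
  set E := D.map fstL with hE
  set Ebar := Dbar.map fstL with hEbarDef
  set K := D ⊓ Dbar with hK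
  set F := E ⊓ Ebar with hF
  set G := K.map fstL with hG
  have hEbar_set : (Ebar : Set V) = σ '' (E : Set V) := by
    ext u
    constructor
    · rintro ⟨q, hq, rfl⟩
      obtain ⟨p, hp, rfl⟩ := hDbar_mem' q hq
      exact ⟨p.1, ⟨p, hp, rfl⟩, (hσP1 p).symm⟩
    · rintro ⟨u', ⟨p, hp, rfl⟩, rfl⟩
      exact ⟨σP p, hDbar_mem p hp, hσP1 p⟩
  have hdimEbar : Module.finrank ℂ Ebar = Module.finrank ℂ E :=
    (finrank_conj_eq σ hσadd hσsmul hσinv E Ebar hEbar_set).symm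
  -- annihilator characterizations
  have annD : ∀ q ∈ D, q.1 = (0 : V) → ∀ u ∈ E, q.2 u = 0 := by
    intro q hq h0 u hu
    obtain ⟨p, hp, rfl⟩ := hu
    have := hiso q hq p hp
    simpa [pairC, h0, hfstL] using this
  have annDbar : ∀ q ∈ Dbar, q.1 = (0 : V) → ∀ u ∈ Ebar, q.2 u = 0 := by
    intro q hq h0 u hu
    obtain ⟨p, hp, rfl⟩ := hu
    have := hisobar q hq p hp
    simpa [pairC, h0, hfstL] using this
  have memD_ann : ∀ ξ : Module.Dual ℂ V, (∀ u ∈ E, ξ u = 0) → ((0 : V), ξ) ∈ D := by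
    intro ξ hξ
    rw [← hperp]
    rw [LinearMap.BilinForm.mem_orthogonal_iff]
    intro a ha
    show pairB V a ((0 : V), ξ) = 0
    have ha1 : a.1 ∈ E := ⟨a, ha, rfl⟩
    simp [pairC, hξ a.1 ha1]
  have memDbar_ann : ∀ ξ : Module.Dual ℂ V, (∀ u ∈ Ebar, ξ u = 0) → ((0 : V), ξ) ∈ Dbar := by
    intro ξ hξ
    rw [← hperpbar]
    rw [LinearMap.BilinForm.mem_orthogonal_iff]
    intro a ha
    show pairB V a ((0 : V), ξ) = 0
    have ha1 : a.1 ∈ Ebar := ⟨a, ha, rfl⟩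
    simp [pairC, hξ a.1 ha1]
  -- the kernel of the projection restricted to K
  have hKker : K ⊓ LinearMap.ker fstL
      = Submodule.map (LinearMap.inr ℂ V (Module.Dual ℂ V)) ((E ⊔ Ebar).dualAnnihilator) := by
    ext q
    simp only [Submodule.mem_inf, LinearMap.mem_ker, Submodule.mem_map,
      Submodule.mem_dualAnnihilator]
    constructor
    · rintro ⟨⟨hqD, hqDbar⟩, hq0⟩
      have hq0' : q.1 = 0 := hq0
      refine ⟨q.2, ?_, ?_⟩
      · intro u hu
        obtain ⟨u1, hu1, u2, hu2, rfl⟩ := Submodule.mem_sup.1 hu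
        rw [map_add, annD q hqD hq0' u1 hu1, annDbar q hqDbar hq0' u2 hu2, add_zero]
      · exact Prod.ext hq0'.symm rfl
    · rintro ⟨ξ, hξ, rfl⟩
      refine ⟨⟨memD_ann ξ ?_, memDbar_ann ξ ?_⟩, ?_⟩
      · intro u hu; exact hξ u (Submodule.mem_sup_left hu)
      · intro u hu; exact hξ u (Submodule.mem_sup_right hu)
      · show fstL ((0 : V), ξ) = 0
        rfl
  -- dimension bookkeeping
  have e1 : Module.finrank ℂ G
      + Module.finrank ℂ (K ⊓ LinearMap.ker fstL : Submodule ℂ (V × Module.Dual ℂ V))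
      = Module.finrank ℂ K := finrank_map_add_inf_ker fstL K
  have e2 : Module.finrank ℂ (K ⊓ LinearMap.ker fstL : Submodule ℂ (V × Module.Dual ℂ V))
      = Module.finrank ℂ ((E ⊔ Ebar).dualAnnihilator) := by
    rw [hKker]
    exact (LinearEquiv.finrank_eq
      (Submodule.equivMapOfInjective _ LinearMap.inr_injective _)).symm
  have e3 : Module.finrank ℂ ((E ⊔ Ebar).dualAnnihilator)
      + Module.finrank ℂ (E ⊔ Ebar : Submodule ℂ V) = n := by
    rw [← LinearEquiv.finrank_eq (Subspace.quotEquivAnnihilator (E ⊔ Ebar))]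
    exact Submodule.finrank_quotient_add_finrank _
  have e4 : Module.finrank ℂ (E ⊔ Ebar : Submodule ℂ V) + Module.finrank ℂ F
      = Module.finrank ℂ E + Module.finrank ℂ Ebar :=
    Submodule.finrank_sup_add_finrank_inf_eq E Ebar
  -- lifts of elements of F
  have hFE : F ≤ E := inf_le_left
  have hFEbar : F ≤ Ebar := inf_le_right
  have liftD : ∀ v : ↥F, ∃ d, d ∈ D ∧ fstL d = (v : V) := fun v =>
    Submodule.mem_map.1 (hFE v.2)
  have liftDbar : ∀ v : ↥F, ∃ d, d ∈ Dbar ∧ fstL d = (v : V) := fun v =>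
    Submodule.mem_map.1 (hFEbar v.2)
  let dD : ↥F → V × Module.Dual ℂ V := fun v => (liftD v).choose
  have dD_mem : ∀ v, dD v ∈ D := fun v => (liftD v).choose_spec.1
  have dD_fst : ∀ v, (dD v).1 = (v : V) := fun v => (liftD v).choose_spec.2
  let dB : ↥F → V × Module.Dual ℂ V := fun v => (liftDbar v).choose
  have dB_mem : ∀ v, dB v ∈ Dbar := fun v => (liftDbar v).choose_spec.1
  have dB_fst : ∀ v, (dB v).1 = (v : V) := fun v => (liftDbar v).choose_spec.2
  -- the induced pairing on F
  let c : ↥F → ↥F → ℂ := fun v w => pairC (dD v) (dB w)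
  have c_spec : ∀ (v w : ↥F) (d e : V × Module.Dual ℂ V), d ∈ D → e ∈ Dbar →
      d.1 = (v : V) → e.1 = (w : V) → c v w = pairC d e := by
    intro v w d e hd he hdv hew
    have h1 : pairC (dD v) (dB w - e) = 0 := by
      have hm : dB w - e ∈ Dbar := sub_mem (dB_mem w) he
      have h0 : (dB w - e).1 = 0 := by rw [Prod.fst_sub, dB_fst w, hew, sub_self]
      have h2 : (dB w - e).2 (dD v).1 = 0 := by
        rw [dD_fst v]
        exact annDbar _ hm h0 (v : V) (hFEbar v.2)
      show (dB w - e).2 (dD v).1 + (dD v).2 (dB w - e).1 = 0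
      rw [h2, h0, map_zero, add_zero]
    have h2 : pairC (dD v - d) e = 0 := by
      have hm : dD v - d ∈ D := sub_mem (dD_mem v) hd
      have h0 : (dD v - d).1 = 0 := by rw [Prod.fst_sub, dD_fst v, hdv, sub_self]
      show e.2 (dD v - d).1 + (dD v - d).2 e.1 = 0
      rw [h0, map_zero, zero_add, hew]
      exact annD _ hm h0 (w : V) (hFE w.2)
    calc c v w = pairC (dD v) (dB w) := rfl
      _ = pairC (dD v) e + pairC (dD v) (dB w - e) := by rw [pairC_sub_right]; ring
      _ = pairC (dD v) e := by rw [h1, add_zero]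
      _ = pairC d e + pairC (dD v - d) e := by rw [pairC_sub_left]; ring
      _ = pairC d e := by rw [h2, add_zero]
  -- bilinearity
  have c_addl : ∀ (v v' w : ↥F), c (v + v') w = c v w + c v' w := by
    intro v v' w
    have h := c_spec (v + v') w (dD v + dD v') (dB w) (add_mem (dD_mem v) (dD_mem v'))
      (dB_mem w) (by rw [Prod.fst_add, dD_fst, dD_fst, Submodule.coe_add]) (dB_fst w)
    rw [h, pairC_add_left]
  have c_smull : ∀ (a : ℂ) (v w : ↥F), c (a • v) w = a * c v w := by
    intro a v w
    have h := c_spec (a • v) w (a • dD v) (dB w) (Submodule.smul_mem _ a (dD_mem v))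
      (dB_mem w) (by rw [Prod.smul_fst, dD_fst, Submodule.coe_smul]) (dB_fst w)
    rw [h, pairC_smul_left]
  have c_addr : ∀ (v w w' : ↥F), c v (w + w') = c v w + c v w' := by
    intro v w w'
    have h := c_spec v (w + w') (dD v) (dB w + dB w') (dD_mem v)
      (add_mem (dB_mem w) (dB_mem w')) (dD_fst v)
      (by rw [Prod.fst_add, dB_fst, dB_fst, Submodule.coe_add])
    rw [h, pairC_add_right]
  have c_smulr : ∀ (a : ℂ) (v w : ↥F), c v (a • w) = a * c v w := by
    intro a v w
    have h := c_spec v (a • w) (dD v) (a • dB w) (dD_mem v)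
      (Submodule.smul_mem _ a (dB_mem w)) (dD_fst v)
      (by rw [Prod.smul_fst, dB_fst, Submodule.coe_smul])
    rw [h, pairC_smul_right]
  set CF : LinearMap.BilinForm ℂ ↥F :=
    LinearMap.mk₂ ℂ c c_addl c_smull c_addr c_smulr with hCF
  have CF_apply : ∀ v w : ↥F, CF v w = c v w := fun v w => rfl
  -- CF is alternating
  have hAltC : CF.IsAlt := by
    intro v
    have hd : (dD v).2 ((v : V)) = 0 := by
      have h := hiso (dD v) (dD_mem v) (dD v) (dD_mem v)
      have h2 : (dD v).2 (dD v).1 + (dD v).2 (dD v).1 = 0 := h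
      rw [dD_fst v] at h2
      exact add_self_eq_zero.1 h2
    have he : (dB v).2 ((v : V)) = 0 := by
      have h := hisobar (dB v) (dB_mem v) (dB v) (dB_mem v)
      have h2 : (dB v).2 (dB v).1 + (dB v).2 (dB v).1 = 0 := h
      rw [dB_fst v] at h2
      exact add_self_eq_zero.1 h2
    show (dB v).2 (dD v).1 + (dD v).2 (dB v).1 = 0
    rw [dD_fst v, dB_fst v, hd, he, add_zero]
  -- the radical of CF corresponds to G
  have hrad : (CF.orthogonal ⊤).map F.subtype = G := by
    apply le_antisymm
    · intro u hu
      obtain ⟨z, hz, rfl⟩ := Submodule.mem_map.1 hu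
      have hz' := LinearMap.BilinForm.mem_orthogonal_iff.1 hz
      have hkey : ∀ u' ∈ F, ((dD z).2 - (dB z).2) u' = 0 := by
        intro u' hu'
        have hcwz : c ⟨u', hu'⟩ z = 0 := hz' ⟨u', hu'⟩ Submodule.mem_top
        have h1 : (dB z).2 u' + (dD ⟨u', hu'⟩).2 ((z : V)) = 0 := by
          simpa [c, pairC, dD_fst, dB_fst] using hcwz
        have h2 : (dD z).2 u' + (dD ⟨u', hu'⟩).2 ((z : V)) = 0 := by
          simpa [pairC, dD_fst, dB_fst] using
            hiso (dD ⟨u', hu'⟩) (dD_mem _) (dD z) (dD_mem z)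
        have h3 : (dD z).2 u' - (dB z).2 u' = 0 := by linear_combination h2 - h1
        simpa [LinearMap.sub_apply] using h3
      have hmem : (dD z).2 - (dB z).2 ∈ E.dualAnnihilator ⊔ Ebar.dualAnnihilator := by
        rw [← Subspace.dualAnnihilator_inf_eq, Submodule.mem_dualAnnihilator]
        intro u' hu'
        exact hkey u' hu'
      obtain ⟨α, hα, β, hβ, hαβ⟩ := Submodule.mem_sup.1 hmem
      have hαE : ∀ u' ∈ E, α u' = 0 := fun u' hu' =>
        (Submodule.mem_dualAnnihilator α).1 hα u' hu'
      have hβE : ∀ u' ∈ Ebar, β u' = 0 := fun u' hu' =>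
        (Submodule.mem_dualAnnihilator β).1 hβ u' hu'
      have hpD : ((z : V), (dD z).2 - α) ∈ D := by
        have h0 : ((0 : V), α) ∈ D := memD_ann α hαE
        have heq : ((z : V), (dD z).2 - α) = dD z - ((0 : V), α) := by
          apply Prod.ext
          · rw [Prod.fst_sub, dD_fst]; simp
          · rfl
        rw [heq]; exact sub_mem (dD_mem z) h0
      have hpDbar : ((z : V), (dD z).2 - α) ∈ Dbar := by
        have h0 : ((0 : V), β) ∈ Dbar := memDbar_ann β hβE
        have h2 : (dD z).2 - α = (dB z).2 + β := by
          calc (dD z).2 - α = ((dD z).2 - (dB z).2) - α + (dB z).2 := by abel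
            _ = (α + β) - α + (dB z).2 := by rw [hαβ]
            _ = (dB z).2 + β := by abel
        have heq : ((z : V), (dD z).2 - α) = dB z + ((0 : V), β) := by
          apply Prod.ext
          · rw [Prod.fst_add, dB_fst]; simp
          · exact h2
        rw [heq]; exact add_mem (dB_mem z) h0
      exact Submodule.mem_map.2 ⟨((z : V), (dD z).2 - α), ⟨hpD, hpDbar⟩, rfl⟩
    · intro u hu
      obtain ⟨p, hp, rfl⟩ := Submodule.mem_map.1 hu
      have huF : fstL p ∈ F := ⟨⟨p, hp.1, rfl⟩, ⟨p, hp.2, rfl⟩⟩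
      refine Submodule.mem_map.2 ⟨⟨fstL p, huF⟩, ?_, rfl⟩
      rw [LinearMap.BilinForm.mem_orthogonal_iff]
      intro w _
      show c w ⟨fstL p, huF⟩ = 0
      have h := c_spec w ⟨fstL p, huF⟩ (dD w) p (dD_mem w) hp.2 (dD_fst w) rfl
      rw [h]
      exact hiso (dD w) (dD_mem w) p hp.1
  have e5 : Module.finrank ℂ G = Module.finrank ℂ (CF.orthogonal ⊤) := by
    rw [← hrad]
    exact Submodule.finrank_map_subtype_eq F _
  have e6 : Module.finrank ℂ (CF.orthogonal ⊤) % 2 = Module.finrank ℂ F % 2 :=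
    alt_parity (Module.finrank ℂ F) (↥F) CF hAltC le_rfl
  omega
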